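/- Every neutralizable Dyck picture is a Dyck crossword: DN₁ ⊆ DC₁, i.e., if a picture over {a,b,c,d} can be fully neutralized then all its rows are Dyck words for pairs [a,b],[c,d] and all its columns are Dyck words for pairs [a,c],[b,d]. -/

import Mathlib

/-- The alphabet Δ₁ = {a, b, c, d}. -/
inductive Del : Type
  | a | b | c | d
deriving DecidableEq

/-- Row cancellation: pairs [a,b] and [c,d]. -/
def rowStep (w w' : List Del) : Prop :=
  ∃ (u v : List Del),
    (w = u ++ [Del.a, Del.b] ++ v ∨ w = u ++ [Del.c, Del.d] ++ v) ∧ w' = u ++ v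

/-- The row Dyck language D^Row. -/
def DRow (w : List Del) : Prop := Relation.ReflTransGen rowStep w []

/-- Column cancellation: pairs [a,c] and [b,d]. -/
def colStep (w w' : List Del) : Prop :=
  ∃ (u v : List Del),
    (w = u ++ [Del.a, Del.c] ++ v ∨ w = u ++ [Del.b, Del.d] ++ v) ∧ w' = u ++ v

/-- The column Dyck language D^Col. -/
def DCol (w : List Del) : Prop := Relation.ReflTransGen colStep w []

/-- Row i (of length n) of a picture. -/
def row (p : ℕ → ℕ → Del) (n i : ℕ) : List Del := (List.range n).map (p i)

/-- Column j (of length m) of a picture. -/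
def col (p : ℕ → ℕ → Del) (m j : ℕ) : List Del :=
  (List.range m).map (fun i => p i j)

/-- The Dyck crossword language DC₁: nonempty pictures all of whose rows
are in D^Row and all of whose columns are in D^Col. -/
def DC (m n : ℕ) (p : ℕ → ℕ → Del) : Prop :=
  1 ≤ m ∧ 1 ≤ n ∧ (∀ i < m, DRow (row p n i)) ∧ (∀ j < n, DCol (col p m j))

/-- The alphabet Δ₁ ∪ {N}. -/
inductive DelN : Type
  | a | b | c | d | N
deriving DecidableEq

def embed : Del → DelN
  | Del.a => DelN.a
  | Del.b => DelN.b
  | Del.c => DelN.c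
  | Del.d => DelN.d

/-- One neutralization step inside an m×n picture: a subpicture of size at
least 2×2 whose four corners are a, b, c, d and whose remaining cells are
all N is replaced by an all-N subpicture. -/
def nstep (m n : ℕ) (q q' : ℕ → ℕ → DelN) : Prop :=
  ∃ (i j i' j' : ℕ), i < i' ∧ j < j' ∧ i' < m ∧ j' < n ∧
    q i j = DelN.a ∧ q i j' = DelN.b ∧ q i' j = DelN.c ∧ q i' j' = DelN.d ∧
    (∀ r s, i ≤ r → r ≤ i' → j ≤ s → s ≤ j' →
      ¬((r = i ∨ r = i') ∧ (s = j ∨ s = j')) → q r s = DelN.N) ∧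
    (∀ r s, (i ≤ r ∧ r ≤ i' ∧ j ≤ s ∧ s ≤ j') → q' r s = DelN.N) ∧
    (∀ r s, ¬(i ≤ r ∧ r ≤ i' ∧ j ≤ s ∧ s ≤ j') → q' r s = q r s)

/-- The neutralizable Dyck language DN₁: nonempty pictures over Δ₁ that can
be transformed into the all-N picture by neutralization steps. -/
def DN (m n : ℕ) (p : ℕ → ℕ → Del) : Prop :=
  1 ≤ m ∧ 1 ≤ n ∧
    ∃ q : ℕ → ℕ → DelN,
      Relation.ReflTransGen (nstep m n) (fun r s => embed (p r s)) q ∧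
      ∀ r < m, ∀ s < n, q r s = DelN.N

def unembed : DelN → Option Del
  | DelN.a => some Del.a
  | DelN.b => some Del.b
  | DelN.c => some Del.c
  | DelN.d => some Del.d
  | DelN.N => none

@[simp] lemma unembed_embed (x : Del) : unembed (embed x) = some x := by
  cases x <;> rfl

/-- The projection of a length-`n` word read from `f`, dropping `N`s. -/
def stripF (f : ℕ → DelN) (n : ℕ) : List Del :=
  (List.range n).filterMap (fun s => unembed (f s))

lemma filterMap_congr' {α β : Type} (f g : α → Option β) (l : List α)
    (h : ∀ a ∈ l, f a = g a) : l.filterMap f = l.filterMap g := by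
  induction l with
  | nil => rfl
  | cons a l ih =>
    simp only [List.filterMap_cons, h a (by simp)]
    rw [ih (fun a ha => h a (by simp [ha]))]

lemma strip_decomp (f g : ℕ → DelN) (x y : Del) (n j j' : ℕ)
    (hjj : j < j') (hj'n : j' < n)
    (hfj : unembed (f j) = some x) (hfj' : unembed (f j') = some y)
    (hmid : ∀ s, j < s → s < j' → f s = DelN.N)
    (hg : ∀ s, j ≤ s → s ≤ j' → g s = DelN.N)
    (hout : ∀ s, s < j ∨ j' < s → f s = g s) :
    ∃ u v, stripF f n = u ++ [x, y] ++ v ∧ stripF g n = u ++ v := by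
  have hsplit : List.range n =
      (List.range j ++ [j]) ++ ((List.range (j' - (j + 1))).map ((j + 1) + ·) ++ [j'])
        ++ (List.range (n - (j' + 1))).map ((j' + 1) + ·) := by
    obtain ⟨k, rfl⟩ : ∃ k, j' = j + 1 + k := ⟨j' - (j + 1), by omega⟩
    obtain ⟨t, rfl⟩ : ∃ t, n = j + 1 + k + 1 + t := ⟨n - (j + 1 + k + 1), by omega⟩
    rw [show j + 1 + k - (j + 1) = k by omega,
      show j + 1 + k + 1 + t - (j + 1 + k + 1) = t by omega,
      List.range_add, List.range_succ, List.range_add, List.range_succ]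
    simp [List.append_assoc]
  refine ⟨(List.range j).filterMap (fun s => unembed (f s)),
    ((List.range (n - (j' + 1))).map ((j' + 1) + ·)).filterMap (fun s => unembed (f s)), ?_, ?_⟩
  · unfold stripF
    rw [hsplit]
    simp only [List.filterMap_append, List.filterMap_cons, List.filterMap_nil, hfj, hfj']
    have hm : (List.filterMap (fun s => unembed (f s))
        ((List.range (j' - (j + 1))).map ((j + 1) + ·))) = [] := by
      rw [List.filterMap_eq_nil_iff]
      intro s hs
      simp only [List.mem_map, List.mem_range] at hs
      obtain ⟨t, ht, rfl⟩ := hs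
      rw [hmid _ (by omega) (by omega)]
      rfl
    rw [hm]
    simp
  · unfold stripF
    rw [hsplit]
    simp only [List.filterMap_append, List.filterMap_cons, List.filterMap_nil]
    have h1 : unembed (g j) = none := by rw [hg j le_rfl (by omega)]; rfl
    have h2 : unembed (g j') = none := by rw [hg j' (by omega) le_rfl]; rfl
    have hm : (List.filterMap (fun s => unembed (g s))
        ((List.range (j' - (j + 1))).map ((j + 1) + ·))) = [] := by
      rw [List.filterMap_eq_nil_iff]
      intro s hs
      simp only [List.mem_map, List.mem_range] at hs
      obtain ⟨t, ht, rfl⟩ := hs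
      rw [hg _ (by omega) (by omega)]
      rfl
    have hpre : (List.range j).filterMap (fun s => unembed (g s))
        = (List.range j).filterMap (fun s => unembed (f s)) := by
      refine filterMap_congr' _ _ _ (fun s hs => ?_)
      rw [hout s (Or.inl (List.mem_range.mp hs))]
    have hpost : ((List.range (n - (j' + 1))).map ((j' + 1) + ·)).filterMap
          (fun s => unembed (g s))
        = ((List.range (n - (j' + 1))).map ((j' + 1) + ·)).filterMap
          (fun s => unembed (f s)) := by
      refine filterMap_congr' _ _ _ (fun s hs => ?_)
      simp only [List.mem_map, List.mem_range] at hs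
      obtain ⟨t, ht, rfl⟩ := hs
      rw [hout _ (Or.inr (by omega))]
    rw [h1, h2, hm, hpre, hpost]
    simp

/-- Invariant: every row strips to a row-Dyck word and every column to a
column-Dyck word. -/
def NInv (m n : ℕ) (q : ℕ → ℕ → DelN) : Prop :=
  (∀ i < m, DRow (stripF (q i) n)) ∧ (∀ j < n, DCol (stripF (fun r => q r j) m))

lemma ninv_step {m n : ℕ} {q q' : ℕ → ℕ → DelN} (hs : nstep m n q q')
    (h : NInv m n q') : NInv m n q := by
  obtain ⟨i, j, i', j', hii, hjj, him, hjn, ha, hb, hc, hd, hint, hN, hout⟩ := hs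
  constructor
  · intro r hr
    by_cases hri : r = i
    · subst hri
      obtain ⟨u, v, hu, hv⟩ := strip_decomp (q r) (q' r) Del.a Del.b n j j' hjj hjn
        (by rw [ha]; rfl) (by rw [hb]; rfl)
        (fun s h1 h2 => hint r s le_rfl (le_of_lt hii) (le_of_lt h1) (le_of_lt h2)
          (by omega))
        (fun s h1 h2 => hN r s ⟨le_rfl, le_of_lt hii, h1, h2⟩)
        (fun s hso => (hout r s (by omega)).symm)
      refine Relation.ReflTransGen.head ⟨u, v, Or.inl hu, hv⟩ ?_
      exact h.1 r hr
    · by_cases hri' : r = i'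
      · subst hri'
        obtain ⟨u, v, hu, hv⟩ := strip_decomp (q r) (q' r) Del.c Del.d n j j' hjj hjn
          (by rw [hc]; rfl) (by rw [hd]; rfl)
          (fun s h1 h2 => hint r s (le_of_lt hii) le_rfl (le_of_lt h1) (le_of_lt h2)
            (by omega))
          (fun s h1 h2 => hN r s ⟨le_of_lt hii, le_rfl, h1, h2⟩)
          (fun s hso => (hout r s (by omega)).symm)
        refine Relation.ReflTransGen.head ⟨u, v, Or.inr hu, hv⟩ ?_
        exact h.1 r hr
      · have : stripF (q r) n = stripF (q' r) n := by
          refine filterMap_congr' _ _ _ (fun s _ => ?_)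
          by_cases hin : i ≤ r ∧ r ≤ i' ∧ j ≤ s ∧ s ≤ j'
          · rw [hint r s hin.1 hin.2.1 hin.2.2.1 hin.2.2.2 (by omega),
              hN r s hin]
          · rw [hout r s hin]
        rw [this]
        exact h.1 r hr
  · intro s hsn
    by_cases hsj : s = j
    · subst hsj
      obtain ⟨u, v, hu, hv⟩ := strip_decomp (fun r => q r s) (fun r => q' r s)
        Del.a Del.c m i i' hii him
        (by change unembed (q i s) = _; rw [ha]; rfl) (by change unembed (q i' s) = _; rw [hc]; rfl)
        (fun r h1 h2 => hint r s (le_of_lt h1) (le_of_lt h2) le_rfl (le_of_lt hjj)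
          (by omega))
        (fun r h1 h2 => hN r s ⟨h1, h2, le_rfl, le_of_lt hjj⟩)
        (fun r hro => (hout r s (by omega)).symm)
      refine Relation.ReflTransGen.head ⟨u, v, Or.inl hu, hv⟩ ?_
      exact h.2 s hsn
    · by_cases hsj' : s = j'
      · subst hsj'
        obtain ⟨u, v, hu, hv⟩ := strip_decomp (fun r => q r s) (fun r => q' r s)
          Del.b Del.d m i i' hii him
          (by change unembed (q i s) = _; rw [hb]; rfl) (by change unembed (q i' s) = _; rw [hd]; rfl)
          (fun r h1 h2 => hint r s (le_of_lt h1) (le_of_lt h2) (le_of_lt hjj) le_rfl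
            (by omega))
          (fun r h1 h2 => hN r s ⟨h1, h2, le_of_lt hjj, le_rfl⟩)
          (fun r hro => (hout r s (by omega)).symm)
        refine Relation.ReflTransGen.head ⟨u, v, Or.inr hu, hv⟩ ?_
        exact h.2 s hsn
      · have : stripF (fun r => q r s) m = stripF (fun r => q' r s) m := by
          refine filterMap_congr' _ _ _ (fun r _ => ?_)
          by_cases hin : i ≤ r ∧ r ≤ i' ∧ j ≤ s ∧ s ≤ j'
          · simp only []
            rw [hint r s hin.1 hin.2.1 hin.2.2.1 hin.2.2.2 (by omega), hN r s hin]
          · simp only []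
            rw [hout r s hin]
        rw [this]
        exact h.2 s hsn

/-- Every neutralizable picture is a Dyck crossword: DN₁ ⊆ DC₁. -/
theorem DN_subset_DC (m n : ℕ) (p : ℕ → ℕ → Del) (h : DN m n p) :
    DC m n p := by
  obtain ⟨hm, hn, q, hred, hqN⟩ := h
  have hfin : NInv m n q := by
    constructor
    · intro i hi
      have : stripF (q i) n = [] := by
        rw [stripF, List.filterMap_eq_nil_iff]
        intro s hs
        rw [hqN i hi s (List.mem_range.mp hs)]
        rfl
      rw [this]
      exact Relation.ReflTransGen.refl
    · intro s hs
      have : stripF (fun r => q r s) m = [] := by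
        rw [stripF, List.filterMap_eq_nil_iff]
        intro r hr
        show unembed (q r s) = none
        rw [hqN r (List.mem_range.mp hr) s hs]
        rfl
      rw [this]
      exact Relation.ReflTransGen.refl
  have hinv : NInv m n (fun r s => embed (p r s)) := by
    refine Relation.ReflTransGen.head_induction_on hred hfin ?_
    intro a c hac _ hc
    exact ninv_step hac hc
  refine ⟨hm, hn, fun i hi => ?_, fun s hs => ?_⟩
  · have := hinv.1 i hi
    have hst : stripF (fun s => embed (p i s)) n = row p n i := by
      rw [stripF, row]
      rw [show (fun s => unembed (embed (p i s))) = (some ∘ (p i)) from funext fun s => unembed_embed _,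
        List.filterMap_eq_map]
    rwa [hst] at this
  · have := hinv.2 s hs
    have hst : stripF (fun r => embed (p r s)) m = col p m s := by
      rw [stripF, col]
      rw [show (fun r => unembed (embed (p r s))) = (some ∘ (fun r => p r s)) from funext fun r => unembed_embed _,
        List.filterMap_eq_map]
    rwa [hst] at this
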